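/- arXiv:1805.06826 — 2 statements merged into one kernel-verified Lean document; each statement's English description precedes it below -/
import Mathlib

section
/- Let X be a real-valued random variable with cumulative distribution function F, and let V be uniform on (0,1) and independent of X. Define the modified distribution function F(x, λ) = P(X < x) + λ·P(X = x) and set U = F(X, V) = F(X⁻) + V·(F(X) − F(X⁻)), where F(X⁻) denotes the left limit of F at X. Then U is uniformly distributed on (0,1). -/
open MeasureTheory ProbabilityTheory Set

/-- Auxiliary: the set where `F (X ω) ≤ u ≤ Fm (X ω)` (i.e. `F` and `Fm` both equal `u`
at `X ω`) is null, provided `u < 1`. -/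
lemma dtu_aux_null {Ω : Type*} [MeasurableSpace Ω]
    (μ : Measure Ω) [IsProbabilityMeasure μ]
    (X : Ω → ℝ) (hX : Measurable X) (F Fm : ℝ → ℝ)
    (hF : ∀ x, F x = (μ {ω | X ω ≤ x}).toReal)
    (hFm : ∀ x, Fm x = (μ {ω | X ω < x}).toReal)
    (u : ℝ) (hu1 : u < 1) :
    μ {ω | F (X ω) ≤ u ∧ u ≤ Fm (X ω)} = 0 := by
  have hμle : ∀ x, μ {ω | X ω ≤ x} = ENNReal.ofReal (F x) := fun x => by
    rw [hF]; exact (ENNReal.ofReal_toReal (measure_ne_top μ _)).symm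
  have hμlt : ∀ x, μ {ω | X ω < x} = ENNReal.ofReal (Fm x) := fun x => by
    rw [hFm]; exact (ENNReal.ofReal_toReal (measure_ne_top μ _)).symm
  have hFmono : Monotone F := fun a b hab => by
    rw [hF, hF]
    exact ENNReal.toReal_mono (measure_ne_top μ _)
      (measure_mono fun ω h => le_trans h hab)
  have hFmmono : Monotone Fm := fun a b hab => by
    rw [hFm, hFm]
    exact ENNReal.toReal_mono (measure_ne_top μ _)
      (measure_mono fun ω h => lt_of_lt_of_le h hab)
  have hcross : ∀ {p q : ℝ}, p < q → F p ≤ Fm q := fun {p q} h => by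
    rw [hF, hFm]
    exact ENNReal.toReal_mono (measure_ne_top μ _)
      (measure_mono fun ω hw => lt_of_le_of_lt hw h)
  -- key vanishing lemma
  have key : ∀ p q : ℝ, u ≤ Fm p → F q ≤ u → μ {ω | p ≤ X ω ∧ X ω ≤ q} = 0 := by
    intro p q hp hq
    rcases lt_or_ge q p with h | h
    · have : {ω | p ≤ X ω ∧ X ω ≤ q} = ∅ := by
        ext ω; simp only [mem_setOf_eq, mem_empty_iff_false, iff_false, not_and, not_le]
        intro h1; linarith
      rw [this, measure_empty]
    · have hsub : {ω | p ≤ X ω ∧ X ω ≤ q} ⊆ {ω | X ω ≤ q} \ {ω | X ω < p} :=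
        fun ω hw => ⟨hw.2, not_lt.2 hw.1⟩
      refine measure_mono_null hsub ?_
      have hdiff : μ ({ω | X ω ≤ q} \ {ω | X ω < p}) = μ {ω | X ω ≤ q} - μ {ω | X ω < p} :=
        measure_diff (fun ω (hw : X ω < p) => le_of_lt (lt_of_lt_of_le hw h))
          ((hX measurableSet_Iio).nullMeasurableSet) (measure_ne_top μ _)
      rw [hdiff, hμle, hμlt]
      exact tsub_eq_zero_of_le (ENNReal.ofReal_le_ofReal (hq.trans hp))
  by_cases hS : ∃ x : ℝ, F x ≤ u ∧ u ≤ Fm x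
  swap
  · refine measure_mono_null (fun ω hω => (hS ⟨X ω, hω⟩).elim) (measure_empty (μ := μ))
  obtain ⟨x, hxF, hxFm⟩ := hS
  have hu0 : 0 ≤ u := le_trans (by rw [hF]; exact ENNReal.toReal_nonneg) hxF
  have hsplit : {ω | F (X ω) ≤ u ∧ u ≤ Fm (X ω)} ⊆
      {ω | X ω ≤ x ∧ u ≤ Fm (X ω)} ∪ {ω | x ≤ X ω ∧ F (X ω) ≤ u} := by
    intro ω ⟨h1, h2⟩
    rcases le_total (X ω) x with h | h
    · exact Or.inl ⟨h, h2⟩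
    · exact Or.inr ⟨h, h1⟩
  refine measure_mono_null hsplit (measure_union_null ?_ ?_)
  · -- left part
    rcases eq_or_lt_of_le hu0 with he | hu0'
    · have h0 : μ {ω | X ω ≤ x} = 0 := by
        rw [hμle]
        have : F x = 0 :=
          le_antisymm (hxF.trans he.symm.le) (by rw [hF]; exact ENNReal.toReal_nonneg)
        rw [this, ENNReal.ofReal_zero]
      exact measure_mono_null (fun ω hω => hω.1) h0
    · have hex_bot : ∃ b : ℝ, Fm b < u := by
        by_contra hcon
        push_neg at hcon
        have hanti : Antitone (fun n : ℕ => {ω | X ω < -(n : ℝ)}) := by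
          intro m n hmn ω (h : X ω < -(n : ℝ))
          exact lt_of_lt_of_le h (by exact_mod_cast neg_le_neg (Nat.cast_le.2 hmn))
        have hiInter : (⋂ n : ℕ, {ω | X ω < -(n : ℝ)}) = ∅ := by
          ext ω
          simp only [mem_iInter, mem_setOf_eq, mem_empty_iff_false, iff_false, not_forall, not_lt]
          obtain ⟨n, hn⟩ := exists_nat_ge (-(X ω))
          exact ⟨n, by linarith⟩
        have := Directed.measure_iInter (μ := μ) (s := fun n : ℕ => {ω | X ω < -(n : ℝ)})
          (fun n : ℕ => (hX measurableSet_Iio).nullMeasurableSet)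
          (hanti.directed_ge) ⟨0, measure_ne_top μ _⟩
        rw [hiInter, measure_empty] at this
        have hge : ENNReal.ofReal u ≤ ⨅ n : ℕ, μ {ω | X ω < -(n : ℝ)} :=
          le_iInf fun n => by rw [hμlt]; exact ENNReal.ofReal_le_ofReal (hcon _)
        rw [← this, le_zero_iff, ENNReal.ofReal_eq_zero] at hge
        linarith
      obtain ⟨b, hb⟩ := hex_bot
      set Aq := {y : ℝ | u ≤ Fm y} with hAq
      have hxA : x ∈ Aq := hxFm
      have hbdd : BddBelow Aq := ⟨b, fun y hy => by
        by_contra hby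
        push_neg at hby
        exact absurd (le_trans hy (hFmmono hby.le)) (not_le.2 hb)⟩
      set a := sInf Aq with ha
      by_cases haA : u ≤ Fm a
      · refine measure_mono_null ?_ (key a x haA hxF)
        intro ω hω
        simp only [Set.mem_setOf_eq] at hω ⊢
        exact ⟨csInf_le hbdd hω.2, hω.1⟩
      · have hsub : {ω | X ω ≤ x ∧ u ≤ Fm (X ω)} ⊆
            ⋃ q : ℚ, {ω | u ≤ Fm (q : ℝ) ∧ (q : ℝ) ≤ X ω ∧ X ω ≤ x} := by
          rintro ω ⟨h1, h2⟩
          have hXA : X ω ∈ Aq := h2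
          have haX : a < X ω := lt_of_le_of_ne (csInf_le hbdd hXA)
            (fun he => haA (he ▸ h2))
          obtain ⟨s, hsA, hsX⟩ := exists_lt_of_csInf_lt ⟨x, hxA⟩ haX
          obtain ⟨q, hq1, hq2⟩ := exists_rat_btwn hsX
          exact mem_iUnion.2 ⟨q, le_trans hsA (hFmmono hq1.le), hq2.le, h1⟩
        refine measure_mono_null hsub (measure_iUnion_null fun q => ?_)
        by_cases hq : u ≤ Fm (q : ℝ)
        · refine measure_mono_null ?_ (key q x hq hxF)
          intro ω hω
          simp only [Set.mem_setOf_eq] at hω ⊢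
          exact ⟨hω.2.1, hω.2.2⟩
        · refine measure_mono_null (fun ω hω => (hq hω.1).elim) (measure_empty (μ := μ))
  · -- right part
    have hex_top : ∃ b : ℝ, u < F b := by
      by_contra hcon
      push_neg at hcon
      have hmono : Monotone (fun n : ℕ => {ω | X ω ≤ (n : ℝ)}) := by
        intro m n hmn ω (h : X ω ≤ (m : ℝ))
        exact h.trans (by exact_mod_cast hmn)
      have hiUnion : (⋃ n : ℕ, {ω | X ω ≤ (n : ℝ)}) = univ := by
        ext ω
        simp only [mem_iUnion, mem_setOf_eq, mem_univ, iff_true]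
        exact exists_nat_ge (X ω)
      have h1 := Monotone.measure_iUnion (μ := μ) hmono
      rw [hiUnion, measure_univ] at h1
      have hle : (⨆ n : ℕ, μ {ω | X ω ≤ (n : ℝ)}) ≤ ENNReal.ofReal u :=
        iSup_le fun n => by rw [hμle]; exact ENNReal.ofReal_le_ofReal (hcon _)
      rw [← h1] at hle
      exact absurd (lt_of_le_of_lt hle (ENNReal.ofReal_lt_one.2 hu1)) (lt_irrefl _)
    obtain ⟨b, hb⟩ := hex_top
    set Bq := {y : ℝ | F y ≤ u} with hBq
    have hxB : x ∈ Bq := hxF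
    have hbdd : BddAbove Bq := ⟨b, fun y hy => by
      by_contra hby
      push_neg at hby
      exact absurd (le_trans (hFmono hby.le) hy) (not_le.2 hb)⟩
    set c := sSup Bq with hc
    by_cases hcB : F c ≤ u
    · refine measure_mono_null ?_ (key x c hxFm hcB)
      intro ω hω
      simp only [Set.mem_setOf_eq] at hω ⊢
      exact ⟨hω.1, le_csSup hbdd hω.2⟩
    · have hsub : {ω | x ≤ X ω ∧ F (X ω) ≤ u} ⊆
          ⋃ q : ℚ, {ω | F (q : ℝ) ≤ u ∧ x ≤ X ω ∧ X ω ≤ (q : ℝ)} := by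
        rintro ω ⟨h1, h2⟩
        have hXB : X ω ∈ Bq := h2
        have hXc : X ω < c := lt_of_le_of_ne (le_csSup hbdd hXB)
          (fun he => hcB (he ▸ h2))
        obtain ⟨s, hsB, hXs⟩ := exists_lt_of_lt_csSup ⟨x, hxB⟩ hXc
        obtain ⟨q, hq1, hq2⟩ := exists_rat_btwn hXs
        exact mem_iUnion.2 ⟨q, le_trans (hFmono hq2.le) hsB, h1, hq1.le⟩
      refine measure_mono_null hsub (measure_iUnion_null fun q => ?_)
      by_cases hq : F (q : ℝ) ≤ u
      · refine measure_mono_null ?_ (key x q hxFm hq)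
        intro ω hω
        simp only [Set.mem_setOf_eq] at hω ⊢
        exact ⟨hω.2.1, hω.2.2⟩
      · refine measure_mono_null (fun ω hω => (hq hω.1).elim) (measure_empty (μ := μ))
/-- the distributional transform `U = F(X⁻) + V·(F(X) − F(X⁻))`, where
`F(x) = P(X ≤ x)`, `F(x⁻) = P(X < x)` and `V ∼ Uniform(0,1)` is independent of `X`,
is uniformly distributed on `(0,1)`. -/
theorem distributional_transform_uniform
    {Ω : Type*} [MeasurableSpace Ω]
    (μ : Measure Ω) [IsProbabilityMeasure μ]
    (X V : Ω → ℝ) (hX : Measurable X) (hV : Measurable V)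
    (hVunif : μ.map V = volume.restrict (Set.Ioo (0 : ℝ) 1))
    (hindep : IndepFun X V μ)
    (F Fm : ℝ → ℝ)
    (hF : ∀ x, F x = (μ {ω | X ω ≤ x}).toReal)
    (hFm : ∀ x, Fm x = (μ {ω | X ω < x}).toReal)
    (U : Ω → ℝ)
    (hU : ∀ ω, U ω = Fm (X ω) + V ω * (F (X ω) - Fm (X ω))) :
    μ.map U = volume.restrict (Set.Ioo (0 : ℝ) 1) := by
  have hμle : ∀ x, μ {ω | X ω ≤ x} = ENNReal.ofReal (F x) := fun x => by
    rw [hF]; exact (ENNReal.ofReal_toReal (measure_ne_top μ _)).symm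
  have hμlt : ∀ x, μ {ω | X ω < x} = ENNReal.ofReal (Fm x) := fun x => by
    rw [hFm]; exact (ENNReal.ofReal_toReal (measure_ne_top μ _)).symm
  have hFnn : ∀ x, 0 ≤ F x := fun x => by rw [hF]; exact ENNReal.toReal_nonneg
  have hFmnn : ∀ x, 0 ≤ Fm x := fun x => by rw [hFm]; exact ENNReal.toReal_nonneg
  have hFle1 : ∀ x, F x ≤ 1 := fun x => by
    rw [hF]
    calc (μ {ω | X ω ≤ x}).toReal ≤ (1 : ENNReal).toReal :=
      ENNReal.toReal_mono ENNReal.one_ne_top prob_le_one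
    _ = 1 := ENNReal.toReal_one
  have hFmono : Monotone F := fun a b hab => by
    rw [hF, hF]
    exact ENNReal.toReal_mono (measure_ne_top μ _) (measure_mono fun ω h => le_trans h hab)
  have hFmmono : Monotone Fm := fun a b hab => by
    rw [hFm, hFm]
    exact ENNReal.toReal_mono (measure_ne_top μ _) (measure_mono fun ω h => lt_of_lt_of_le h hab)
  have hFmleF : ∀ x, Fm x ≤ F x := fun x => by
    rw [hF, hFm]
    exact ENNReal.toReal_mono (measure_ne_top μ _)
      (measure_mono fun ω h => show X ω ≤ x from le_of_lt h)
  have hcross : ∀ {p q : ℝ}, p < q → F p ≤ Fm q := fun {p q} h => by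
    rw [hF, hFm]
    exact ENNReal.toReal_mono (measure_ne_top μ _)
      (measure_mono fun ω hw => lt_of_le_of_lt hw h)
  have hUmeas : Measurable U := by
    have hUeq : U = fun ω => Fm (X ω) + V ω * (F (X ω) - Fm (X ω)) := funext hU
    rw [hUeq]
    exact ((hFmmono.measurable).comp hX).add
      (hV.mul (((hFmono.measurable).comp hX).sub ((hFmmono.measurable).comp hX)))
  have hGc : μ (V ⁻¹' Set.Ioo (0 : ℝ) 1)ᶜ = 0 := by
    rw [← Set.preimage_compl, ← Measure.map_apply hV measurableSet_Ioo.compl, hVunif,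
      Measure.restrict_apply measurableSet_Ioo.compl, Set.compl_inter_self, measure_empty]
  have hG1 : μ (V ⁻¹' Set.Ioo (0 : ℝ) 1) = 1 := by
    rw [← Measure.map_apply hV measurableSet_Ioo, hVunif,
      Measure.restrict_apply measurableSet_Ioo, Set.inter_self, Real.volume_Ioo]
    norm_num
  haveI : IsProbabilityMeasure (μ.map U) := Measure.isProbabilityMeasure_map hUmeas.aemeasurable
  refine Measure.ext_of_Iic (μ.map U) _ (fun u => ?_)
  rw [Measure.map_apply hUmeas measurableSet_Iic, Measure.restrict_apply measurableSet_Iic]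
  rcases le_or_gt u 0 with hu0 | hu0
  · -- the case u ≤ 0
    have hRHS : Set.Iic u ∩ Set.Ioo (0 : ℝ) 1 = ∅ := by
      ext y
      simp only [Set.mem_inter_iff, Set.mem_Iic, Set.mem_Ioo, Set.mem_empty_iff_false,
        iff_false, not_and]
      intro h1 h2; linarith
    rw [hRHS, measure_empty]
    have hsub : U ⁻¹' Set.Iic u ⊆
        {ω | F (X ω) ≤ u ∧ u ≤ Fm (X ω)} ∪ (V ⁻¹' Set.Ioo (0 : ℝ) 1)ᶜ := by
      intro ω hω
      by_cases hg : V ω ∈ Set.Ioo (0 : ℝ) 1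
      · have h1 : Fm (X ω) + V ω * (F (X ω) - Fm (X ω)) ≤ u := by
          rw [← hU ω]; exact hω
        have hp : 0 ≤ V ω * (F (X ω) - Fm (X ω)) :=
          mul_nonneg hg.1.le (sub_nonneg.2 (hFmleF _))
        have hz : V ω * (F (X ω) - Fm (X ω)) = 0 :=
          le_antisymm (by linarith [hFmnn (X ω)]) hp
        rcases mul_eq_zero.1 hz with h | h
        · exact absurd h (ne_of_gt hg.1)
        · exact Or.inl (show F (X ω) ≤ u ∧ u ≤ Fm (X ω) from
            ⟨by linarith, by linarith [hFmnn (X ω)]⟩)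
      · exact Or.inr hg
    exact measure_mono_null hsub
      (measure_union_null (dtu_aux_null μ X hX F Fm hF hFm u (by linarith)) hGc)
  rcases lt_or_ge u 1 with hu1 | hu1
  swap
  · -- the case 1 ≤ u
    have hRHS : Set.Iic u ∩ Set.Ioo (0 : ℝ) 1 = Set.Ioo 0 1 :=
      Set.inter_eq_right.2 fun y hy => le_of_lt (lt_of_lt_of_le hy.2 hu1)
    rw [hRHS, Real.volume_Ioo]
    have hsub : V ⁻¹' Set.Ioo (0 : ℝ) 1 ⊆ U ⁻¹' Set.Iic u := by
      intro ω hg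
      have hvd : V ω * (F (X ω) - Fm (X ω)) ≤ F (X ω) - Fm (X ω) :=
        mul_le_of_le_one_left (sub_nonneg.2 (hFmleF _)) hg.2.le
      show U ω ≤ u
      rw [hU ω]
      linarith [hFle1 (X ω)]
    have h1 : (1 : ENNReal) ≤ μ (U ⁻¹' Set.Iic u) := hG1 ▸ measure_mono hsub
    rw [le_antisymm prob_le_one h1]
    norm_num
  -- the main case 0 < u < 1
  have hRHS : Set.Iic u ∩ Set.Ioo (0 : ℝ) 1 = Set.Ioc 0 u := by
    ext y
    simp only [Set.mem_inter_iff, Set.mem_Iic, Set.mem_Ioo, Set.mem_Ioc]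
    constructor
    · rintro ⟨h1, h2, h3⟩; exact ⟨h2, h1⟩
    · rintro ⟨h1, h2⟩; exact ⟨h2, h1, lt_of_le_of_lt h2 hu1⟩
  rw [hRHS, Real.volume_Ioc, sub_zero]
  -- the quantile
  have hex_top : ∃ b : ℝ, u < F b := by
    by_contra hcon
    push_neg at hcon
    have hmono : Monotone (fun n : ℕ => {ω | X ω ≤ (n : ℝ)}) := by
      intro m n hmn ω (h : X ω ≤ (m : ℝ))
      exact h.trans (by exact_mod_cast hmn)
    have hiUnion : (⋃ n : ℕ, {ω | X ω ≤ (n : ℝ)}) = Set.univ := by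
      ext ω
      simp only [Set.mem_iUnion, Set.mem_setOf_eq, Set.mem_univ, iff_true]
      exact exists_nat_ge (X ω)
    have h1 := Monotone.measure_iUnion (μ := μ) hmono
    rw [hiUnion, measure_univ] at h1
    have hle : (⨆ n : ℕ, μ {ω | X ω ≤ (n : ℝ)}) ≤ ENNReal.ofReal u :=
      iSup_le fun n => by rw [hμle]; exact ENNReal.ofReal_le_ofReal (hcon _)
    rw [← h1] at hle
    exact absurd (lt_of_le_of_lt hle (ENNReal.ofReal_lt_one.2 hu1)) (lt_irrefl _)
  have hex_bot : ∃ b : ℝ, Fm b < u := by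
    by_contra hcon
    push_neg at hcon
    have hanti : Antitone (fun n : ℕ => {ω | X ω < -(n : ℝ)}) := by
      intro m n hmn ω (h : X ω < -(n : ℝ))
      exact lt_of_lt_of_le h (by exact_mod_cast neg_le_neg (Nat.cast_le.2 hmn))
    have hiInter : (⋂ n : ℕ, {ω | X ω < -(n : ℝ)}) = ∅ := by
      ext ω
      simp only [Set.mem_iInter, Set.mem_setOf_eq, Set.mem_empty_iff_false, iff_false,
        not_forall, not_lt]
      obtain ⟨n, hn⟩ := exists_nat_ge (-(X ω))
      exact ⟨n, by linarith⟩
    have h1 := Directed.measure_iInter (μ := μ) (s := fun n : ℕ => {ω | X ω < -(n : ℝ)})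
      (fun n : ℕ => (hX measurableSet_Iio).nullMeasurableSet)
      (hanti.directed_ge) ⟨0, measure_ne_top μ _⟩
    rw [hiInter, measure_empty] at h1
    have hge : ENNReal.ofReal u ≤ ⨅ n : ℕ, μ {ω | X ω < -(n : ℝ)} :=
      le_iInf fun n => by rw [hμlt]; exact ENNReal.ofReal_le_ofReal (hcon _)
    rw [← h1, le_zero_iff, ENNReal.ofReal_eq_zero] at hge
    linarith
  obtain ⟨bt, hbt⟩ := hex_top
  obtain ⟨bb, hbb⟩ := hex_bot
  set Aq := {y : ℝ | u ≤ F y} with hAqdef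
  have hAne : Aq.Nonempty := ⟨bt, hbt.le⟩
  have hAbdd : BddBelow Aq := ⟨bb, fun y hy => by
    by_contra hby
    push_neg at hby
    exact absurd (le_trans hy (hcross hby)) (not_le.2 hbb)⟩
  set x₀ := sInf Aq with hx₀def
  have hFmx₀ : Fm x₀ ≤ u := by
    have hun : {ω | X ω < x₀} = ⋃ n : ℕ, {ω | X ω ≤ x₀ - 1 / ((n : ℝ) + 1)} := by
      ext ω
      simp only [Set.mem_iUnion, Set.mem_setOf_eq]
      constructor
      · intro h
        obtain ⟨n, hn⟩ := exists_nat_one_div_lt (sub_pos.2 h)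
        exact ⟨n, by push_cast at hn ⊢; linarith⟩
      · rintro ⟨n, hn⟩
        have h1 : (0 : ℝ) < 1 / ((n : ℝ) + 1) := by positivity
        linarith
    have hmono : Monotone (fun n : ℕ => {ω | X ω ≤ x₀ - 1 / ((n : ℝ) + 1)}) := by
      intro m n hmn ω (h : X ω ≤ x₀ - 1 / ((m : ℝ) + 1))
      refine le_trans h ?_
      have h2 : 1 / ((n : ℝ) + 1) ≤ 1 / ((m : ℝ) + 1) := by
        apply one_div_le_one_div_of_le (by positivity)
        exact_mod_cast Nat.succ_le_succ hmn
      linarith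
    have key1 : μ {ω | X ω < x₀} ≤ ENNReal.ofReal u := by
      rw [hun, Monotone.measure_iUnion hmono]
      refine iSup_le fun n => ?_
      rw [hμle]
      refine ENNReal.ofReal_le_ofReal (le_of_lt ?_)
      by_contra hc
      push_neg at hc
      have h2 : x₀ ≤ x₀ - 1 / ((n : ℝ) + 1) := csInf_le hAbdd hc
      have h1 : (0 : ℝ) < 1 / ((n : ℝ) + 1) := by positivity
      linarith
    rw [hμlt] at key1
    exact (ENNReal.ofReal_le_ofReal_iff hu0.le).1 key1
  have hFx₀ : u ≤ F x₀ := by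
    have hun : {ω | X ω ≤ x₀} = ⋂ n : ℕ, {ω | X ω ≤ x₀ + 1 / ((n : ℝ) + 1)} := by
      ext ω
      simp only [Set.mem_iInter, Set.mem_setOf_eq]
      constructor
      · intro h n
        have h1 : (0 : ℝ) < 1 / ((n : ℝ) + 1) := by positivity
        linarith
      · intro h
        by_contra hc
        push_neg at hc
        obtain ⟨n, hn⟩ := exists_nat_one_div_lt (sub_pos.2 hc)
        have h2 := h n
        push_cast at hn
        linarith
    have hanti : Antitone (fun n : ℕ => {ω | X ω ≤ x₀ + 1 / ((n : ℝ) + 1)}) := by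
      intro m n hmn ω (h : X ω ≤ x₀ + 1 / ((n : ℝ) + 1))
      refine le_trans h ?_
      have h2 : 1 / ((n : ℝ) + 1) ≤ 1 / ((m : ℝ) + 1) := by
        apply one_div_le_one_div_of_le (by positivity)
        exact_mod_cast Nat.succ_le_succ hmn
      linarith
    have key1 : ENNReal.ofReal u ≤ μ {ω | X ω ≤ x₀} := by
      rw [hun, Directed.measure_iInter (s := fun n : ℕ => {ω | X ω ≤ x₀ + 1 / ((n : ℝ) + 1)})
        (fun n => (hX measurableSet_Iic).nullMeasurableSet) hanti.directed_ge
        ⟨0, measure_ne_top μ _⟩]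
      refine le_iInf fun n => ?_
      rw [hμle]
      refine ENNReal.ofReal_le_ofReal ?_
      have h1 : (0 : ℝ) < 1 / ((n : ℝ) + 1) := by positivity
      obtain ⟨s, hsA, hs⟩ := exists_lt_of_csInf_lt hAne
        (show sInf Aq < x₀ + 1 / ((n : ℝ) + 1) by rw [← hx₀def]; linarith)
      exact le_trans hsA (hFmono hs.le)
    rw [hμle] at key1
    exact (ENNReal.ofReal_le_ofReal_iff (hFnn x₀)).1 key1
  set d := F x₀ - Fm x₀ with hddef
  set t := u - Fm x₀ with htdef
  have hd0 : 0 ≤ d := sub_nonneg.2 (hFmleF x₀)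
  have ht0 : 0 ≤ t := sub_nonneg.2 hFmx₀
  have htd : t ≤ d := sub_le_sub_right hFx₀ _
  have hatom : μ {ω | X ω = x₀} = ENNReal.ofReal d := by
    have hsplit : {ω | X ω ≤ x₀} = {ω | X ω < x₀} ∪ {ω | X ω = x₀} := by
      ext ω
      simp only [Set.mem_setOf_eq, Set.mem_union]
      exact ⟨fun h => h.lt_or_eq, fun h => h.elim le_of_lt le_of_eq⟩
    have hdisj : Disjoint {ω | X ω < x₀} {ω | X ω = x₀} :=
      Set.disjoint_left.2 fun ω h1 h2 => absurd h2 (ne_of_lt h1)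
    have hm := measure_union (μ := μ) hdisj (hX (measurableSet_singleton x₀))
    rw [← hsplit, hμle, hμlt] at hm
    have h2 : μ {ω | X ω = x₀} = ENNReal.ofReal (F x₀) - ENNReal.ofReal (Fm x₀) :=
      ENNReal.eq_sub_of_add_eq ENNReal.ofReal_ne_top (by rw [add_comm]; exact hm.symm)
    rw [h2, ← ENNReal.ofReal_sub _ (hFmnn x₀)]
  have hBmeasure : μ {ω | X ω = x₀ ∧ V ω * d ≤ t} = ENNReal.ofReal t := by
    rcases eq_or_lt_of_le hd0 with hd | hd
    · have ht : t = 0 := le_antisymm (htd.trans_eq hd.symm) ht0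
      rw [ht, ENNReal.ofReal_zero]
      refine measure_mono_null ?_
        (show μ {ω | X ω = x₀} = 0 by rw [hatom, ← hd, ENNReal.ofReal_zero])
      intro ω hω
      simp only [Set.mem_setOf_eq] at hω ⊢
      exact hω.1
    · have hset : {ω | X ω = x₀ ∧ V ω * d ≤ t} = X ⁻¹' {x₀} ∩ V ⁻¹' Set.Iic (t / d) := by
        ext ω
        simp only [Set.mem_setOf_eq, Set.mem_inter_iff, Set.mem_preimage,
          Set.mem_singleton_iff, Set.mem_Iic]
        constructor
        · rintro ⟨h1, h2⟩; exact ⟨h1, (le_div_iff₀ hd).2 h2⟩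
        · rintro ⟨h1, h2⟩; exact ⟨h1, (le_div_iff₀ hd).1 h2⟩
      rw [hset, hindep.measure_inter_preimage_eq_mul _ _ (measurableSet_singleton x₀)
        measurableSet_Iic]
      have h1 : μ (X ⁻¹' {x₀}) = ENNReal.ofReal d := hatom
      have h2 : μ (V ⁻¹' Set.Iic (t / d)) = ENNReal.ofReal (t / d) := by
        rw [← Measure.map_apply hV measurableSet_Iic, hVunif,
          Measure.restrict_apply measurableSet_Iic]
        have hle1 : t / d ≤ 1 := (div_le_one hd).2 htd
        apply le_antisymm
        · have hss : Set.Iic (t / d) ∩ Set.Ioo 0 1 ⊆ Set.Ioc 0 (t / d) := fun y hy =>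
            ⟨hy.2.1, hy.1⟩
          calc volume (Set.Iic (t / d) ∩ Set.Ioo 0 1) ≤ volume (Set.Ioc 0 (t / d)) :=
              measure_mono hss
            _ = ENNReal.ofReal (t / d) := by rw [Real.volume_Ioc, sub_zero]
        · have hss : Set.Ioo 0 (t / d) ⊆ Set.Iic (t / d) ∩ Set.Ioo 0 1 := fun y hy =>
            ⟨hy.2.le, hy.1, lt_of_lt_of_le hy.2 hle1⟩
          have hvol : ENNReal.ofReal (t / d) = volume (Set.Ioo 0 (t / d)) := by
            rw [Real.volume_Ioo, sub_zero]
          exact le_trans (le_of_eq hvol) (measure_mono hss)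
      rw [h1, h2, ← ENNReal.ofReal_mul hd0]
      congr 1
      rw [mul_comm, div_mul_cancel₀ t (ne_of_gt hd)]
  have hupper : U ⁻¹' Set.Iic u ⊆
      ({ω | X ω < x₀} ∪ {ω | X ω = x₀ ∧ V ω * d ≤ t}) ∪
        {ω | F (X ω) ≤ u ∧ u ≤ Fm (X ω)} ∪ (V ⁻¹' Set.Ioo (0 : ℝ) 1)ᶜ := by
    intro ω hω
    by_cases hg : V ω ∈ Set.Ioo (0 : ℝ) 1
    swap
    · exact Or.inr hg
    have hωu : Fm (X ω) + V ω * (F (X ω) - Fm (X ω)) ≤ u := by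
      rw [← hU ω]; exact hω
    rcases lt_trichotomy (X ω) x₀ with h | h | h
    · exact Or.inl (Or.inl (Or.inl h))
    · refine Or.inl (Or.inl (Or.inr (show X ω = x₀ ∧ V ω * d ≤ t from ⟨h, ?_⟩)))
      rw [h] at hωu
      rw [hddef, htdef]
      linarith
    · refine Or.inl (Or.inr (show F (X ω) ≤ u ∧ u ≤ Fm (X ω) from ?_))
      have hFmu : u ≤ Fm (X ω) := le_trans hFx₀ (hcross h)
      have hp : 0 ≤ V ω * (F (X ω) - Fm (X ω)) :=
        mul_nonneg hg.1.le (sub_nonneg.2 (hFmleF _))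
      have hz : V ω * (F (X ω) - Fm (X ω)) = 0 := le_antisymm (by linarith) hp
      rcases mul_eq_zero.1 hz with h' | h'
      · exact absurd h' (ne_of_gt hg.1)
      · exact ⟨by linarith, hFmu⟩
  have hlower : ({ω | X ω < x₀} ∪ {ω | X ω = x₀ ∧ V ω * d ≤ t}) ⊆
      U ⁻¹' Set.Iic u ∪ (V ⁻¹' Set.Ioo (0 : ℝ) 1)ᶜ := by
    intro ω h
    by_cases hg : V ω ∈ Set.Ioo (0 : ℝ) 1
    swap
    · exact Or.inr hg
    left
    show U ω ≤ u
    rw [hU ω]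
    simp only [Set.mem_union, Set.mem_setOf_eq] at h
    rcases h with h | h
    · have h1 : V ω * (F (X ω) - Fm (X ω)) ≤ F (X ω) - Fm (X ω) :=
        mul_le_of_le_one_left (sub_nonneg.2 (hFmleF _)) hg.2.le
      have h2 : F (X ω) ≤ Fm x₀ := hcross h
      linarith
    · obtain ⟨he, hvd⟩ := h
      rw [he]
      rw [hddef, htdef] at hvd
      linarith
  have hABdisj : Disjoint {ω | X ω < x₀} {ω | X ω = x₀ ∧ V ω * d ≤ t} :=
    Set.disjoint_left.2 fun ω h1 h2 => absurd h2.1 (ne_of_lt h1)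
  have hBmeas : MeasurableSet {ω | X ω = x₀ ∧ V ω * d ≤ t} := by
    have hset : {ω | X ω = x₀ ∧ V ω * d ≤ t} =
        X ⁻¹' {x₀} ∩ (fun ω => V ω * d) ⁻¹' Set.Iic t := rfl
    rw [hset]
    exact (hX (measurableSet_singleton x₀)).inter ((hV.mul_const d) measurableSet_Iic)
  have hAB : μ ({ω | X ω < x₀} ∪ {ω | X ω = x₀ ∧ V ω * d ≤ t}) = ENNReal.ofReal u := by
    rw [measure_union hABdisj hBmeas, hμlt, hBmeasure, ← ENNReal.ofReal_add (hFmnn x₀) ht0]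
    congr 1
    rw [htdef]; ring
  have hNnull := dtu_aux_null μ X hX F Fm hF hFm u hu1
  refine le_antisymm ?_ ?_
  · refine le_trans (measure_mono hupper) ?_
    calc μ ((({ω | X ω < x₀} ∪ {ω | X ω = x₀ ∧ V ω * d ≤ t}) ∪
          {ω | F (X ω) ≤ u ∧ u ≤ Fm (X ω)}) ∪ (V ⁻¹' Set.Ioo (0 : ℝ) 1)ᶜ)
        ≤ μ (({ω | X ω < x₀} ∪ {ω | X ω = x₀ ∧ V ω * d ≤ t}) ∪
          {ω | F (X ω) ≤ u ∧ u ≤ Fm (X ω)}) + μ (V ⁻¹' Set.Ioo (0 : ℝ) 1)ᶜ :=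
        measure_union_le _ _
      _ ≤ (μ ({ω | X ω < x₀} ∪ {ω | X ω = x₀ ∧ V ω * d ≤ t}) +
          μ {ω | F (X ω) ≤ u ∧ u ≤ Fm (X ω)}) + μ (V ⁻¹' Set.Ioo (0 : ℝ) 1)ᶜ :=
        add_le_add (measure_union_le _ _) le_rfl
      _ = ENNReal.ofReal u := by rw [hNnull, hGc, add_zero, add_zero, hAB]
  · calc ENNReal.ofReal u = μ ({ω | X ω < x₀} ∪ {ω | X ω = x₀ ∧ V ω * d ≤ t}) := hAB.symm
      _ ≤ μ (U ⁻¹' Set.Iic u ∪ (V ⁻¹' Set.Ioo (0 : ℝ) 1)ᶜ) := measure_mono hlower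
      _ ≤ μ (U ⁻¹' Set.Iic u) + μ (V ⁻¹' Set.Ioo (0 : ℝ) 1)ᶜ := measure_union_le _ _
      _ = μ (U ⁻¹' Set.Iic u) := by rw [hGc, add_zero]
end

section
/- With the setup of the distributional transform — X real-valued with CDF F, V ∼ Uniform(0,1) independent of X, and U = F(X⁻) + V·(F(X) − F(X⁻)) — one has X = F⁻¹(U) almost surely, where F⁻¹(u) = inf{x : F(x) ≥ u} is the generalized inverse (quantile function) of F. -/
open MeasureTheory ProbabilityTheory

/-- with the distributional transform `U = F(X⁻) + V·(F(X) − F(X⁻))`,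
one has `X = F⁻¹(U)` almost surely, where `F⁻¹(u) = inf {x | F x ≥ u}` is the
generalized inverse (quantile function) of the CDF `F`. -/
theorem distributional_transform_inverse
    {Ω : Type*} [MeasurableSpace Ω]
    (μ : Measure Ω) [IsProbabilityMeasure μ]
    (X V : Ω → ℝ) (hX : Measurable X) (hV : Measurable V)
    (hVunif : μ.map V = volume.restrict (Set.Ioo (0 : ℝ) 1))
    (hindep : IndepFun X V μ)
    (F Fm : ℝ → ℝ)
    (hF : ∀ x, F x = (μ {ω | X ω ≤ x}).toReal)
    (hFm : ∀ x, Fm x = (μ {ω | X ω < x}).toReal)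
    (U : Ω → ℝ)
    (hU : ∀ ω, U ω = Fm (X ω) + V ω * (F (X ω) - Fm (X ω)))
    (Finv : ℝ → ℝ)
    (hFinv : ∀ u, Finv u = sInf {x : ℝ | u ≤ F x}) :
    ∀ᵐ ω ∂μ, X ω = Finv (U ω) := by
  classical
  have hne : ∀ s : Set Ω, μ s ≠ ⊤ := fun s => measure_ne_top μ s
  have hFmono : ∀ {x y : ℝ}, x ≤ y → F x ≤ F y := by
    intro x y hxy
    rw [hF, hF]
    exact ENNReal.toReal_mono (hne _) (measure_mono (fun ω h => le_trans h hxy))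
  have hFmle : ∀ x, Fm x ≤ F x := by
    intro x; rw [hF, hFm]
    exact ENNReal.toReal_mono (hne _) (measure_mono (fun ω (h : X ω < x) => (h.le : X ω ≤ x)))
  have hFleFm : ∀ {x y : ℝ}, x < y → F x ≤ Fm y := by
    intro x y hxy; rw [hF, hFm]
    exact ENNReal.toReal_mono (hne _) (measure_mono (fun ω h => lt_of_le_of_lt h hxy))
  -- measure of the preimage of a "flat" Ioc is zero
  have hIoc : ∀ {x y : ℝ}, x < y → F y ≤ F x → μ (X ⁻¹' Set.Ioc x y) = 0 := by
    intro x y hxy hFyx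
    have hunion : X ⁻¹' Set.Iic x ∪ X ⁻¹' Set.Ioc x y = X ⁻¹' Set.Iic y := by
      rw [← Set.preimage_union, Set.Iic_union_Ioc_eq_Iic hxy.le]
    have hdisj : Disjoint (X ⁻¹' Set.Iic x) (X ⁻¹' Set.Ioc x y) :=
      (Set.Iic_disjoint_Ioc le_rfl).preimage X
    have hmeas : μ (X ⁻¹' Set.Iic x) + μ (X ⁻¹' Set.Ioc x y) = μ (X ⁻¹' Set.Iic y) := by
      rw [← measure_union hdisj (hX measurableSet_Ioc), hunion]
    have hle : μ (X ⁻¹' Set.Iic y) ≤ μ (X ⁻¹' Set.Iic x) := by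
      have h1 : (μ (X ⁻¹' Set.Iic y)).toReal ≤ (μ (X ⁻¹' Set.Iic x)).toReal := by
        have := hFyx
        rw [hF, hF] at this
        exact this
      exact (ENNReal.toReal_le_toReal (hne _) (hne _)).mp h1
    have : μ (X ⁻¹' Set.Iic x) + μ (X ⁻¹' Set.Ioc x y) ≤ μ (X ⁻¹' Set.Iic x) + 0 := by
      rw [hmeas, add_zero]; exact hle
    have := ENNReal.le_of_add_le_add_left (hne _) this
    exact le_antisymm this zero_le
  -- the bad set B of "left-flat" points, and its null preimage
  set B : Set ℝ := {a | ∃ x, x < a ∧ F a ≤ F x} with hBdef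
  have hXB : μ (X ⁻¹' B) = 0 := by
    have hcover : X ⁻¹' B ⊆ ⋃ q : ℚ, X ⁻¹' {a | (q : ℝ) < a ∧ F a ≤ F (q : ℝ)} := by
      intro ω hω
      obtain ⟨x, hxa, hFa⟩ := hω
      obtain ⟨q, hq1, hq2⟩ := exists_rat_btwn hxa
      exact Set.mem_iUnion.2 ⟨q, hq2, le_trans hFa (hFmono hq1.le)⟩
    refine measure_mono_null hcover (measure_iUnion_null fun q => ?_)
    set c : ℝ := (q : ℝ) with hc
    set T : Set ℝ := {a | c < a ∧ F a ≤ F c} with hT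
    have hnullT : ∀ a ∈ T, μ (X ⁻¹' Set.Ioc c a) = 0 := fun a ha => hIoc ha.1 ha.2
    have hratcover : ∀ ω, X ω ∈ T → (∀ r : ℚ, (r : ℝ) ∈ T → (r : ℝ) < X ω) → False ∨ True := by
      intro _ _ _; right; trivial
    by_cases hS : ∃ ω₀, X ω₀ ∈ T ∧ ∀ r : ℚ, (r : ℝ) ∈ T → (r : ℝ) < X ω₀
    · obtain ⟨ω₀, hω₀T, hω₀⟩ := hS
      have hcov2 : X ⁻¹' T ⊆
          X ⁻¹' Set.Ioc c (X ω₀) ∪ ⋃ r : ℚ, ⋃ (_ : (r : ℝ) ∈ T), X ⁻¹' Set.Ioc c (r : ℝ) := by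
        intro ω hω
        by_cases hr : ∃ r : ℚ, (r : ℝ) ∈ T ∧ X ω ≤ (r : ℝ)
        · obtain ⟨r, hrT, hxr⟩ := hr
          exact Or.inr (Set.mem_iUnion.2 ⟨r, Set.mem_iUnion.2 ⟨hrT, ⟨hω.1, hxr⟩⟩⟩)
        · push_neg at hr
          -- claim X ω ≤ X ω₀
          left
          refine ⟨hω.1, ?_⟩
          by_contra hgt
          push_neg at hgt
          obtain ⟨r, hr1, hr2⟩ := exists_rat_btwn hgt
          have hrT : (r : ℝ) ∈ T := ⟨lt_trans hω₀T.1 hr1, le_trans (hFmono hr2.le) hω.2⟩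
          exact absurd (hω₀ r hrT) (not_lt.2 hr1.le)
      refine measure_mono_null hcov2 ?_
      refine measure_union_null (hnullT _ hω₀T) (measure_iUnion_null fun r => ?_)
      by_cases hrT : (r : ℝ) ∈ T
      · exact measure_mono_null (Set.iUnion_subset fun _ => subset_rfl) (hnullT _ hrT)
      · simp [hrT]
    · push_neg at hS
      have hcov2 : X ⁻¹' T ⊆ ⋃ r : ℚ, ⋃ (_ : (r : ℝ) ∈ T), X ⁻¹' Set.Ioc c (r : ℝ) := by
        intro ω hω
        obtain ⟨r, hrT, hxr⟩ := hS ω hω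
        exact Set.mem_iUnion.2 ⟨r, Set.mem_iUnion.2 ⟨hrT, ⟨hω.1, hxr⟩⟩⟩
      refine measure_mono_null hcov2 (measure_iUnion_null fun r => ?_)
      by_cases hrT : (r : ℝ) ∈ T
      · exact measure_mono_null (Set.iUnion_subset fun _ => subset_rfl) (hnullT _ hrT)
      · simp [hrT]
  -- V is almost surely in (0,1)
  have hVnull : μ (V ⁻¹' (Set.Ioo (0 : ℝ) 1)ᶜ) = 0 := by
    have h1 : μ (V ⁻¹' (Set.Ioo (0 : ℝ) 1)ᶜ) = (μ.map V) (Set.Ioo (0 : ℝ) 1)ᶜ :=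
      (Measure.map_apply hV measurableSet_Ioo.compl).symm
    rw [h1, hVunif, Measure.restrict_apply measurableSet_Ioo.compl]
    simp
  -- the pointwise statement on the good set
  have hgood : ∀ ω, V ω ∈ Set.Ioo (0 : ℝ) 1 → X ω ∉ B → X ω = Finv (U ω) := by
    intro ω hv hb
    set a := X ω with ha
    set v := V ω with hvdef
    have hva : 0 < v := hv.1
    have hvb : v < 1 := hv.2
    have hd : Fm a ≤ F a := hFmle a
    have hu : U ω = Fm a + v * (F a - Fm a) := hU ω
    have huF : U ω ≤ F a := by rw [hu]; nlinarith
    have hlb : ∀ x ∈ {x : ℝ | U ω ≤ F x}, a ≤ x := by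
      intro x hx
      by_contra hxa
      push_neg at hxa
      rcases eq_or_lt_of_le hd with hEq | hLt
      · have huFa : U ω = F a := by rw [hu, ← hEq]; ring
        exact hb ⟨x, hxa, by rw [← huFa]; exact hx⟩
      · have h1 : F x ≤ Fm a := hFleFm hxa
        have h2 : Fm a < U ω := by rw [hu]; nlinarith
        have : U ω ≤ F x := hx
        linarith
    rw [hFinv]
    exact (le_antisymm (csInf_le ⟨a, hlb⟩ huF) (le_csInf ⟨a, huF⟩ hlb)).symm
  -- combine
  rw [MeasureTheory.ae_iff]
  refine measure_mono_null ?_ (measure_union_null hVnull hXB)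
  intro ω hω
  by_contra hcc
  simp only [Set.mem_union, Set.mem_preimage, Set.mem_compl_iff, not_or] at hcc
  push_neg at hcc
  exact hω (hgood ω hcc.1 hcc.2)
end
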